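/- Unbiasedness of the combined f-HNCA gradient estimator (Equation 6 without direct parameter dependence): in the single-unit factorized model extended with a downstream variable W, let f₁ : S → B → (Π j, C j) → W → ℝ be a function component with connections both direct and mediated through the children, and let f₂ : S → B → ℝ be a function component with only a direct connection to Φ. Then t ↦ ∑_{b,φ,c,w} μ b * π t φ b * (∏_j κ j (c j) b φ) * ν w b c * (f₁ φ b c w + f₂ φ b) has derivative at t = θ equal to ∑_{b,φ,c,w} q(b,φ,c,w) * (∑_{φ'} g φ' b * (ρ φ' b c * f₁ φ' b c w + f₂ φ' b)), where q(b,φ,c,w) = μ b * π θ φ b * (∏_j κ j (c j) b φ) * ν w b c; i.e. the f-HNCA estimator that multiplies mediated components by ρ and direct-only components by the raw policy derivative is an unbiased estimator of ∂E[f₁ + f₂]/∂θ. -/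

import Mathlib

/-- Unbiasedness of the combined f-HNCA gradient estimator (Equation 6 without direct
parameter dependence): the estimator that multiplies components with mediated connections
by ρ and direct-only components by the raw policy derivative is an unbiased estimator of
∂E[f₁ + f₂]/∂θ. -/
theorem fhnca_combined_unbiased
    {n : ℕ} {B S W : Type*} {C : Fin n → Type*}
    [Fintype B] [Fintype S] [Fintype W] [Nonempty B] [Nonempty S] [Nonempty W]
    [∀ j, Fintype (C j)] [∀ j, Nonempty (C j)]
    (μ : B → ℝ) (π : ℝ → S → B → ℝ) (κ : (j : Fin n) → C j → B → S → ℝ) (θ : ℝ)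
    (hμpos : ∀ b, 0 < μ b) (hμ1 : ∑ b, μ b = 1)
    (hπ0 : ∀ t φ b, 0 ≤ π t φ b) (hπ1 : ∀ t b, ∑ φ, π t φ b = 1)
    (hπpos : ∀ φ b, 0 < π θ φ b)
    (hκpos : ∀ j cj b φ, 0 < κ j cj b φ) (hκ1 : ∀ j b φ, ∑ cj, κ j cj b φ = 1)
    (g : S → B → ℝ) (hg : ∀ φ b, HasDerivAt (fun t => π t φ b) (g φ b) θ)
    (ν : W → B → (∀ j, C j) → ℝ)
    (hνpos : ∀ w b c, 0 < ν w b c) (hν1 : ∀ b c, ∑ w, ν w b c = 1)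
    (f₁ : S → B → (∀ j, C j) → W → ℝ) (f₂ : S → B → ℝ) :
    HasDerivAt
      (fun t => ∑ b, ∑ φ, ∑ c : ∀ j, C j, ∑ w,
        μ b * π t φ b * (∏ j, κ j (c j) b φ) * ν w b c * (f₁ φ b c w + f₂ φ b))
      (∑ b, ∑ φ, ∑ c : ∀ j, C j, ∑ w,
        (μ b * π θ φ b * (∏ j, κ j (c j) b φ) * ν w b c) *
          (∑ φ', g φ' b *
            (((∏ j, κ j (c j) b φ') /
                (∑ φ'', π θ φ'' b * ∏ j, κ j (c j) b φ'')) * f₁ φ' b c w +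
              f₂ φ' b))) θ := by
  classical
  -- notation
  set K : B → S → (∀ j, C j) → ℝ := fun b φ c => ∏ j, κ j (c j) b φ with hK
  set Z : B → (∀ j, C j) → ℝ := fun b c => ∑ φ'', π θ φ'' b * K b φ'' c with hZdef
  have hZpos : ∀ b (c : ∀ j, C j), 0 < Z b c := fun b c =>
    Finset.sum_pos (fun φ _ => mul_pos (hπpos φ b)
      (Finset.prod_pos fun j _ => hκpos j (c j) b φ)) Finset.univ_nonempty
  have hZne : ∀ b (c : ∀ j, C j), Z b c ≠ 0 := fun b c => (hZpos b c).ne'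
  have hKsum : ∀ b φ, ∑ c : ∀ j, C j, K b φ c = 1 := by
    intro b φ
    have h := Finset.prod_univ_sum (fun j => (Finset.univ : Finset (C j)))
      (fun j cj => κ j cj b φ)
    rw [Fintype.piFinset_univ] at h
    show (∑ c : ∀ j, C j, ∏ j, κ j (c j) b φ) = 1
    rw [← h]
    simp [hκ1]
  have hZsum : ∀ b, ∑ c : ∀ j, C j, Z b c = 1 := by
    intro b
    show (∑ c : ∀ j, C j, ∑ φ, π θ φ b * K b φ c) = 1
    rw [Finset.sum_comm]
    have : ∀ φ, (∑ c : ∀ j, C j, π θ φ b * K b φ c) = π θ φ b := by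
      intro φ; rw [← Finset.mul_sum, hKsum, mul_one]
    simp only [this, hπ1]
  -- derivative with naive value
  have hD : HasDerivAt
      (fun t => ∑ b, ∑ φ, ∑ c : ∀ j, C j, ∑ w,
        μ b * π t φ b * K b φ c * ν w b c * (f₁ φ b c w + f₂ φ b))
      (∑ b, ∑ φ, ∑ c : ∀ j, C j, ∑ w,
        μ b * g φ b * K b φ c * ν w b c * (f₁ φ b c w + f₂ φ b)) θ := by
    refine HasDerivAt.fun_sum fun b _ => HasDerivAt.fun_sum fun φ _ => HasDerivAt.fun_sum fun c _ =>
      HasDerivAt.fun_sum fun w _ => ?_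
    exact ((((hg φ b).const_mul (μ b)).mul_const (K b φ c)).mul_const (ν w b c)).mul_const
      (f₁ φ b c w + f₂ φ b)
  -- the key algebraic identity
  have key : (∑ b, ∑ φ, ∑ c : ∀ j, C j, ∑ w,
        (μ b * π θ φ b * K b φ c * ν w b c) *
          (∑ φ', g φ' b * (K b φ' c / Z b c * f₁ φ' b c w + f₂ φ' b)))
      = ∑ b, ∑ φ, ∑ c : ∀ j, C j, ∑ w,
        μ b * g φ b * K b φ c * ν w b c * (f₁ φ b c w + f₂ φ b) := by
    refine Finset.sum_congr rfl fun b _ => ?_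
    have hL : (∑ φ, ∑ c : ∀ j, C j, ∑ w,
          (μ b * π θ φ b * K b φ c * ν w b c) *
            (∑ φ', g φ' b * (K b φ' c / Z b c * f₁ φ' b c w + f₂ φ' b)))
        = (∑ c : ∀ j, C j, ∑ w, ∑ φ,
            μ b * g φ b * K b φ c * ν w b c * f₁ φ b c w)
          + ∑ φ, μ b * g φ b * f₂ φ b := by
      rw [Finset.sum_comm]
      have step1 : ∀ c : ∀ j, C j, (∑ φ, ∑ w,
            (μ b * π θ φ b * K b φ c * ν w b c) *
              (∑ φ', g φ' b * (K b φ' c / Z b c * f₁ φ' b c w + f₂ φ' b)))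
          = ∑ w, ∑ φ', (μ b * g φ' b * K b φ' c * ν w b c * f₁ φ' b c w
              + μ b * ν w b c * g φ' b * Z b c * f₂ φ' b) := by
        intro c
        rw [Finset.sum_comm]
        refine Finset.sum_congr rfl fun w _ => ?_
        rw [← Finset.sum_mul]
        have hq : (∑ φ, μ b * π θ φ b * K b φ c * ν w b c)
            = μ b * ν w b c * Z b c := by
          rw [hZdef]; simp only [Finset.mul_sum]
          exact Finset.sum_congr rfl fun φ _ => by ring
        rw [hq, Finset.mul_sum]
        refine Finset.sum_congr rfl fun φ' _ => ?_
        field_simp [hZne b c]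
      simp only [step1, Finset.sum_add_distrib]
      congr 1
      have step2 : ∀ c : ∀ j, C j, (∑ w, ∑ φ',
            μ b * ν w b c * g φ' b * Z b c * f₂ φ' b)
          = Z b c * ∑ φ, μ b * g φ b * f₂ φ b := by
        intro c
        have h1 : ∀ w, (∑ φ', μ b * ν w b c * g φ' b * Z b c * f₂ φ' b)
            = ν w b c * (Z b c * ∑ φ, μ b * g φ b * f₂ φ b) := by
          intro w
          simp only [Finset.mul_sum]
          exact Finset.sum_congr rfl fun φ _ => by ring
        simp only [h1]
        rw [← Finset.sum_mul, hν1, one_mul]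
      simp only [step2]
      rw [← Finset.sum_mul, hZsum, one_mul]
    have hR : (∑ φ, ∑ c : ∀ j, C j, ∑ w,
          μ b * g φ b * K b φ c * ν w b c * (f₁ φ b c w + f₂ φ b))
        = (∑ c : ∀ j, C j, ∑ w, ∑ φ,
            μ b * g φ b * K b φ c * ν w b c * f₁ φ b c w)
          + ∑ φ, μ b * g φ b * f₂ φ b := by
      simp only [mul_add, Finset.sum_add_distrib]
      congr 1
      · rw [Finset.sum_comm]
        exact Finset.sum_congr rfl fun c _ => Finset.sum_comm
      · refine Finset.sum_congr rfl fun φ _ => ?_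
        have h1 : ∀ c : ∀ j, C j, (∑ w, μ b * g φ b * K b φ c * ν w b c * f₂ φ b)
            = K b φ c * (μ b * g φ b * f₂ φ b) := by
          intro c
          have : ∀ w, μ b * g φ b * K b φ c * ν w b c * f₂ φ b
              = ν w b c * (K b φ c * (μ b * g φ b * f₂ φ b)) := fun w => by ring
          simp only [this]
          rw [← Finset.sum_mul, hν1, one_mul]
        simp only [h1]
        rw [← Finset.sum_mul, hKsum, one_mul]
    rw [hL, hR]
  rw [← key] at hD
  exact hD
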